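/- Every nonzero product of generators in NC_A(n,d) either lies in the subalgebra generated by T_1,...,T_{n-1}, or can be rewritten using the defining relations in the standard form T_w T_n^k T_{n-1} T_{n-2} ⋯ T_m for some w ∈ S_n, 1 ≤ k ≤ d-1, and 1 ≤ m ≤ n. -/

import Mathlib

/-- Relations of the generalized nil-Coxeter algebra `NC_A(n,d)` on generators
`T_1, …, T_n` (0-indexed by `Fin n`): type-`A_n` braid relations,
`T_i^2 = 0` for `i < n`, and `T_n^d = 0`. -/
inductive NCRel (k : Type) [CommRing k] (n d : ℕ) :
    FreeAlgebra k (Fin n) → FreeAlgebra k (Fin n) → Prop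
  | braid (i j : Fin n) (h : (i : ℕ) + 1 = j) :
      NCRel k n d (FreeAlgebra.ι k i * FreeAlgebra.ι k j * FreeAlgebra.ι k i)
        (FreeAlgebra.ι k j * FreeAlgebra.ι k i * FreeAlgebra.ι k j)
  | comm (i j : Fin n) (h : (i : ℕ) + 1 < j) :
      NCRel k n d (FreeAlgebra.ι k i * FreeAlgebra.ι k j)
        (FreeAlgebra.ι k j * FreeAlgebra.ι k i)
  | sq (i : Fin n) (h : (i : ℕ) + 1 < n) : NCRel k n d (FreeAlgebra.ι k i ^ 2) 0
  | last (i : Fin n) (h : (i : ℕ) + 1 = n) : NCRel k n d (FreeAlgebra.ι k i ^ d) 0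

/-- The generalized nil-Coxeter algebra `NC_A(n,d)`. -/
abbrev NCA (k : Type) [CommRing k] (n d : ℕ) := RingQuot (NCRel k n d)

/-- The generator `T_j` (1-indexed, for `1 ≤ j ≤ n`) of `NC_A(n,d)`. -/
noncomputable def Tg (k : Type) [CommRing k] (n d : ℕ) (j : ℕ) : NCA k n d :=
  if h : 1 ≤ j ∧ j ≤ n then
    RingQuot.mkAlgHom k (NCRel k n d) (FreeAlgebra.ι k ⟨j - 1, by omega⟩) else 1

/-- The descending product `T_{n-1} T_{n-2} ⋯ T_m` in `NC_A(n,d)`. -/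
noncomputable def descT (k : Type) [CommRing k] (n d : ℕ) (m : ℕ) : NCA k n d :=
  ((List.range' m (n - m)).reverse.map (Tg k n d)).prod

/-- The product of generators `T_{j}` along a (1-indexed) word `l`. -/
noncomputable def TwOf (k : Type) [CommRing k] (n d : ℕ) (l : List ℕ) : NCA k n d :=
  (l.map (Tg k n d)).prod

/-- The simple transposition `s_j = (j, j+1)` (1-indexed) in the symmetric group
on `{1, …, n}`, realized as `Equiv.Perm (Fin n)`. -/
def sp (n : ℕ) (j : ℕ) : Equiv.Perm (Fin n) :=
  if h : 1 ≤ j ∧ j < n then Equiv.swap ⟨j - 1, by omega⟩ ⟨j, h.2⟩ else 1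

/-- `l` is a reduced word for `w ∈ S_n` in the simple transpositions `s_1, …, s_{n-1}`. -/
def IsRedWord (n : ℕ) (w : Equiv.Perm (Fin n)) (l : List ℕ) : Prop :=
  (∀ j ∈ l, 1 ≤ j ∧ j < n) ∧ (l.map (sp n)).prod = w ∧
    ∀ l' : List ℕ, (∀ j ∈ l', 1 ≤ j ∧ j < n) → (l'.map (sp n)).prod = w →
      l.length ≤ l'.length

namespace NCAux

variable (k : Type) [CommRing k] (n d : ℕ)

lemma Tg_def (j : ℕ) (h1 : 1 ≤ j) (h2 : j ≤ n) :
    Tg k n d j = RingQuot.mkAlgHom k (NCRel k n d) (FreeAlgebra.ι k ⟨j - 1, by omega⟩) :=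
  dif_pos ⟨h1, h2⟩

lemma rel_sq (j : ℕ) (h1 : 1 ≤ j) (h2 : j + 1 ≤ n) :
    Tg k n d j * Tg k n d j = 0 := by
  rw [Tg_def k n d j h1 (by omega), ← map_mul, ← pow_two]
  rw [RingQuot.mkAlgHom_rel k (NCRel.sq ⟨j-1, by omega⟩ (by simp; omega)), map_zero]

lemma rel_last (hn : 1 ≤ n) : Tg k n d n ^ d = 0 := by
  rw [Tg_def k n d n hn le_rfl, ← map_pow]
  rw [RingQuot.mkAlgHom_rel k (NCRel.last ⟨n-1, by omega⟩ (by simp; omega)), map_zero]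

lemma rel_braid (j : ℕ) (h1 : 1 ≤ j) (h2 : j + 1 ≤ n) :
    Tg k n d j * Tg k n d (j+1) * Tg k n d j
      = Tg k n d (j+1) * Tg k n d j * Tg k n d (j+1) := by
  rw [Tg_def k n d j h1 (by omega), Tg_def k n d (j+1) (by omega) h2]
  rw [← map_mul, ← map_mul, ← map_mul, ← map_mul]
  rw [RingQuot.mkAlgHom_rel k (NCRel.braid ⟨j-1, by omega⟩ ⟨j+1-1, by omega⟩ (by simp; omega))]

lemma rel_comm (i j : ℕ) (h1 : 1 ≤ i) (h2 : i + 1 < j) (h3 : j ≤ n) :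
    Tg k n d i * Tg k n d j = Tg k n d j * Tg k n d i := by
  rw [Tg_def k n d i h1 (by omega), Tg_def k n d j (by omega) h3]
  rw [← map_mul, ← map_mul]
  rw [RingQuot.mkAlgHom_rel k (NCRel.comm ⟨i-1, by omega⟩ ⟨j-1, by omega⟩ (by simp; omega))]

end NCAux
namespace NCAux

variable (k : Type) [CommRing k] (n d : ℕ)

lemma TwOf_append (a b : List ℕ) :
    TwOf k n d (a ++ b) = TwOf k n d a * TwOf k n d b := by
  simp [TwOf]

lemma TwOf_nil : TwOf k n d [] = 1 := rfl

lemma TwOf_singleton (j : ℕ) : TwOf k n d [j] = Tg k n d j := by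
  simp [TwOf]

lemma TwOf_cons (j : ℕ) (l : List ℕ) :
    TwOf k n d (j :: l) = Tg k n d j * TwOf k n d l := by
  simp [TwOf]

/-- `t j` commutes with every letter of `l` that is far from `j`. -/
lemma comm_word (j : ℕ) (h1 : 1 ≤ j) (h3 : j ≤ n) (l : List ℕ)
    (h : ∀ i ∈ l, 1 ≤ i ∧ i ≤ n ∧ (i + 1 < j ∨ j + 1 < i)) :
    Tg k n d j * TwOf k n d l = TwOf k n d l * Tg k n d j := by
  induction l with
  | nil => simp [TwOf_nil]
  | cons a l ih =>
    obtain ⟨ha1, ha2, ha3⟩ := h a (by simp)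
    have hcom : Tg k n d j * Tg k n d a = Tg k n d a * Tg k n d j := by
      rcases ha3 with h' | h'
      · exact (rel_comm k n d a j ha1 h' h3).symm
      · exact rel_comm k n d j a h1 h' ha2
    rw [TwOf_cons, ← mul_assoc, hcom, mul_assoc,
      ih (fun i hi => h i (by simp [hi])), ← mul_assoc]

lemma comm_pow (j K : ℕ) (h1 : 1 ≤ j) (h2 : j + 1 < n) :
    Tg k n d j * Tg k n d n ^ K = Tg k n d n ^ K * Tg k n d j := by
  induction K with
  | zero => simp
  | succ K ih =>
    rw [pow_succ, ← mul_assoc, ih, mul_assoc, mul_assoc,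
      rel_comm k n d j n h1 h2 le_rfl]

/-- The word `[M, M-1, …, m]` (empty when `m > M`). -/
def Db (M m : ℕ) : List ℕ := (List.range' m (M + 1 - m)).reverse

lemma Db_mem (M m i : ℕ) (hi : i ∈ Db M m) : m ≤ i ∧ i ≤ M := by
  simp only [Db, List.mem_reverse, List.mem_range'_1] at hi
  omega

lemma Db_empty (M m : ℕ) (h : M < m) : Db M m = [] := by
  have h0 : M + 1 - m = 0 := by omega
  simp [Db, h0]

lemma Db_snoc (M m : ℕ) (h1 : m ≤ M) : Db M m = Db M (m+1) ++ [m] := by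
  unfold Db
  rw [show M + 1 - m = (M - m) + 1 by omega, List.range'_succ,
    List.reverse_cons, show M - m = M + 1 - (m+1) by omega]

lemma Db_cons (M m : ℕ) (h0 : 1 ≤ m) (h1 : m ≤ M) : Db M m = M :: Db (M-1) m := by
  unfold Db
  rw [show M + 1 - m = (M - m) + 1 by omega, List.range'_1_concat,
    List.reverse_append, show m + (M - m) = M by omega,
    show M - m = M - 1 + 1 - m by omega]
  rfl

lemma Db_length (M m : ℕ) : (Db M m).length = M + 1 - m := by simp [Db]

lemma Db_self (M : ℕ) : Db M M = [M] := by
  rw [Db_snoc M M le_rfl, Db_empty M (M+1) (by omega), List.nil_append]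

/-- Canonical (staircase-form) words: at level `M`, a canonical word at level
`M-1` followed by an optional descending run `[M, M-1, …, m]`. -/
inductive Canon : ℕ → List ℕ → Prop
  | nil : Canon 0 []
  | skip {M c} : Canon M c → Canon (M+1) c
  | block {M c m} : Canon M c → 1 ≤ m → m ≤ M + 1 → Canon (M+1) (c ++ Db (M+1) m)

lemma Canon_mem {M : ℕ} {c : List ℕ} (hc : Canon M c) : ∀ j ∈ c, 1 ≤ j ∧ j ≤ M := by
  induction hc with
  | nil => simp
  | skip _ ih => exact fun j hj => ⟨(ih j hj).1, (ih j hj).2.trans (by omega)⟩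
  | block _ hm1 hm2 ih =>
    intro j hj
    rcases List.mem_append.1 hj with h | h
    · exact ⟨(ih j h).1, (ih j h).2.trans (by omega)⟩
    · have := Db_mem _ _ _ h; omega

lemma Canon_le {M M' : ℕ} {c : List ℕ} (hc : Canon M c) (h : M ≤ M') : Canon M' c := by
  induction h with
  | refl => exact hc
  | step _ ih => exact Canon.skip ih

end NCAux
namespace NCAux

variable (k : Type) [CommRing k] (n d : ℕ)

lemma Db_split (M m t : ℕ) (h1 : m ≤ t + 1) (h2 : t ≤ M) :
    Db M m = Db M (t+1) ++ Db t m := by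
  unfold Db
  rw [← List.reverse_append]
  rw [show t + 1 - m = (t + 1 - m) by rfl]
  have : List.range' m (t + 1 - m) ++ List.range' (t+1) (M + 1 - (t+1))
      = List.range' m (M + 1 - m) := by
    have := List.range'_append_1 (s := m) (m := t + 1 - m) (n := M + 1 - (t+1))
    rw [show m + (t + 1 - m) = t + 1 by omega] at this
    rw [this]
    congr 1
    omega
  rw [this]

lemma mul_single (c : List ℕ) (j : ℕ) :
    TwOf k n d (c ++ [j]) = TwOf k n d c * Tg k n d j := by
  rw [TwOf_append, TwOf_singleton]

/-- `comm_word` with a trailing factor, right-associated. -/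
lemma comm_word_m (j : ℕ) (h1 : 1 ≤ j) (h3 : j ≤ n) (l : List ℕ)
    (h : ∀ i ∈ l, 1 ≤ i ∧ i ≤ n ∧ (i + 1 < j ∨ j + 1 < i)) (x : NCA k n d) :
    TwOf k n d l * (Tg k n d j * x) = Tg k n d j * (TwOf k n d l * x) := by
  rw [← mul_assoc, ← comm_word k n d j h1 h3 l h, mul_assoc]

lemma braid_m (j : ℕ) (h1 : 2 ≤ j) (h2 : j ≤ n) (x : NCA k n d) :
    Tg k n d j * (Tg k n d (j-1) * (Tg k n d j * x))
      = Tg k n d (j-1) * (Tg k n d j * (Tg k n d (j-1) * x)) := by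
  have hb := rel_braid k n d (j-1) (by omega) (by omega)
  rw [show j - 1 + 1 = j by omega] at hb
  rw [← mul_assoc, ← mul_assoc, ← hb, mul_assoc, mul_assoc]

/-- The key braid-shuffle: `T_M ⋯ T_m ⋅ T_j = T_{j-1} ⋅ T_M ⋯ T_m` for `m < j ≤ M`. -/
lemma desc_mul (M m j : ℕ) (hm : 1 ≤ m) (hj : m < j) (hjM : j ≤ M) (hMn : M ≤ n) :
    TwOf k n d (Db M m) * Tg k n d j
      = Tg k n d (j-1) * TwOf k n d (Db M m) := by
  have hsplit : Db M m = Db M (j+1) ++ (j :: (j-1) :: Db (j-2) m) := by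
    rw [Db_split M m j (by omega) hjM, Db_cons j m (by omega) (by omega),
      Db_cons (j-1) m (by omega) (by omega), show j - 1 - 1 = j - 2 by omega]
  have hB : ∀ i ∈ Db (j-2) m, 1 ≤ i ∧ i ≤ n ∧ (i + 1 < j ∨ j + 1 < i) := by
    intro i hi; have := Db_mem _ _ _ hi; refine ⟨by omega, by omega, Or.inl (by omega)⟩
  have hA : ∀ i ∈ Db M (j+1), 1 ≤ i ∧ i ≤ n ∧ (i + 1 < j - 1 ∨ j - 1 + 1 < i) := by
    intro i hi; have := Db_mem _ _ _ hi; refine ⟨by omega, by omega, Or.inr (by omega)⟩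
  rw [hsplit, TwOf_append, TwOf_cons, TwOf_cons]
  simp only [mul_assoc]
  rw [← comm_word k n d j (by omega) (by omega) (Db (j-2) m) hB]
  rw [braid_m k n d j (by omega) (by omega)]
  rw [comm_word_m k n d (j-1) (by omega) (by omega) (Db M (j+1)) hA]

/-- Multiplying a canonical word by a generator `T_j`, `1 ≤ j ≤ M`, gives `0` or a
canonical word. -/
lemma canon_mul (hn : 1 ≤ n) {M : ℕ} {c : List ℕ} (hc : Canon M c) :
    M ≤ n - 1 → ∀ j, 1 ≤ j → j ≤ M →
    TwOf k n d c * Tg k n d j = 0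
      ∨ ∃ c', Canon M c' ∧ TwOf k n d c * Tg k n d j = TwOf k n d c' := by
  induction hc with
  | nil => intro _ j hj1 hj2; omega
  | @skip M c hc ih =>
    intro hMn j hj1 hj2
    rcases Nat.lt_or_ge j (M+1) with h | h
    · rcases ih (by omega) j hj1 (by omega) with h0 | ⟨c', hc', he⟩
      · exact Or.inl h0
      · exact Or.inr ⟨c', Canon.skip hc', he⟩
    · -- j = M+1 : start a new block
      have hjM : j = M + 1 := by omega
      refine Or.inr ⟨c ++ Db (M+1) (M+1), Canon.block hc (by omega) le_rfl, ?_⟩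
      rw [Db_self, ← mul_single, hjM]
  | @block M c m hc hm1 hm2 ih =>
    intro hMn j hj1 hj2
    have hDn : ∀ i ∈ Db (M+1) m, m ≤ i ∧ i ≤ M + 1 := fun i hi => Db_mem _ _ _ hi
    rcases Nat.lt_or_ge (j+1) m with hcase | hge
    · -- j + 1 < m : commute through the block, recurse
      have hcomm : ∀ i ∈ Db (M+1) m, 1 ≤ i ∧ i ≤ n ∧ (i + 1 < j ∨ j + 1 < i) := by
        intro i hi; have := hDn i hi; exact ⟨by omega, by omega, Or.inr (by omega)⟩
      have key : TwOf k n d (c ++ Db (M+1) m) * Tg k n d j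
          = (TwOf k n d c * Tg k n d j) * TwOf k n d (Db (M+1) m) := by
        rw [TwOf_append, mul_assoc, ← comm_word k n d j (by omega) (by omega) _ hcomm,
          mul_assoc]
      rcases ih (by omega) j hj1 (by omega) with h0 | ⟨c', hc', he⟩
      · rw [key, h0, zero_mul]; exact Or.inl rfl
      · exact Or.inr ⟨c' ++ Db (M+1) m, Canon.block hc' hm1 hm2,
          by rw [key, he, TwOf_append]⟩
    rcases Nat.lt_or_ge j m with hcase2 | hge2
    · -- j + 1 = m : extend the block
      have hjm : j + 1 = m := by omega
      refine Or.inr ⟨c ++ Db (M+1) j, Canon.block hc hj1 (by omega), ?_⟩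
      have hD : Db (M+1) m ++ [j] = Db (M+1) j := by
        rw [Db_snoc (M+1) j (by omega), hjm]
      rw [← mul_single, List.append_assoc, hD]
    rcases Nat.eq_or_lt_of_le hge2 with hcase3 | hgt
    · -- j = m : square to zero
      left
      rw [TwOf_append, Db_snoc (M+1) m (by omega), TwOf_append, TwOf_singleton,
        mul_assoc, mul_assoc, ← hcase3, rel_sq k n d m hm1 (by omega), mul_zero, mul_zero]
    · -- m < j ≤ M+1 : braid-shuffle, recurse with j - 1
      have key : TwOf k n d (c ++ Db (M+1) m) * Tg k n d j
          = (TwOf k n d c * Tg k n d (j-1)) * TwOf k n d (Db (M+1) m) := by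
        rw [TwOf_append, mul_assoc,
          desc_mul k n d (M+1) m j hm1 hgt hj2 (by omega), ← mul_assoc]
      rcases ih (by omega) (j-1) (by omega) (by omega) with h0 | ⟨c', hc', he⟩
      · rw [key, h0, zero_mul]; exact Or.inl rfl
      · exact Or.inr ⟨c' ++ Db (M+1) m, Canon.block hc' hm1 hm2,
          by rw [key, he, TwOf_append]⟩

end NCAux
namespace NCAux

variable (k : Type) [CommRing k] (n d : ℕ)

lemma descT_eq (hn : 1 ≤ n) (m : ℕ) : descT k n d m = TwOf k n d (Db (n-1) m) := by
  unfold descT TwOf Db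
  rw [show n - 1 + 1 - m = n - m by omega]

lemma pow_braid_zero (hn : 2 ≤ n) : ∀ K, 2 ≤ K →
    Tg k n d n ^ K * Tg k n d (n-1) * Tg k n d n = 0 := by
  have hb := rel_braid k n d (n-1) (by omega) (by omega)
  rw [show n - 1 + 1 = n by omega] at hb
  have base : Tg k n d n ^ 2 * Tg k n d (n-1) * Tg k n d n = 0 :=
    calc Tg k n d n ^ 2 * Tg k n d (n-1) * Tg k n d n
        = Tg k n d n * (Tg k n d n * Tg k n d (n-1) * Tg k n d n) := by
          rw [pow_two]; simp only [mul_assoc]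
      _ = Tg k n d n * (Tg k n d (n-1) * Tg k n d n * Tg k n d (n-1)) := by rw [← hb]
      _ = Tg k n d n * Tg k n d (n-1) * Tg k n d n * Tg k n d (n-1) := by
          simp only [mul_assoc]
      _ = Tg k n d (n-1) * Tg k n d n * Tg k n d (n-1) * Tg k n d (n-1) := by rw [← hb]
      _ = Tg k n d (n-1) * Tg k n d n * (Tg k n d (n-1) * Tg k n d (n-1)) := by
          simp only [mul_assoc]
      _ = 0 := by rw [rel_sq k n d (n-1) (by omega) (by omega), mul_zero]
  intro K hK
  induction K with
  | zero => omega
  | succ K ih =>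
    rcases Nat.lt_or_ge K 2 with h2 | h2
    · have hKeq : K = 1 := by omega
      subst hKeq
      exact base
    · have : Tg k n d n ^ (K + 1) * Tg k n d (n-1) * Tg k n d n
          = Tg k n d n * (Tg k n d n ^ K * Tg k n d (n-1) * Tg k n d n) := by
        rw [pow_succ']; simp only [mul_assoc]
      rw [this, ih h2, mul_zero]

lemma pow_braid_one (hn : 2 ≤ n) :
    Tg k n d n ^ 1 * Tg k n d (n-1) * Tg k n d n
      = Tg k n d (n-1) * Tg k n d n * Tg k n d (n-1) := by
  have hb := rel_braid k n d (n-1) (by omega) (by omega)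
  rw [show n - 1 + 1 = n by omega] at hb
  rw [pow_one, ← hb]

/-- One multiplication step preserves the standard form (or gives `0`). -/
lemma top_step (hn : 1 ≤ n) (hd : 2 ≤ d) (c : List ℕ) (hc : Canon (n-1) c) (k0 m : ℕ)
    (hk : k0 ≤ d - 1) (hm1 : 1 ≤ m) (hmn : m ≤ n) (hm0 : k0 = 0 → m = n)
    (j : ℕ) (hj1 : 1 ≤ j) (hjn : j ≤ n) :
    TwOf k n d c * Tg k n d n ^ k0 * TwOf k n d (Db (n-1) m) * Tg k n d j = 0
    ∨ ∃ c' k0' m', Canon (n-1) c' ∧ k0' ≤ d - 1 ∧ 1 ≤ m' ∧ m' ≤ n ∧ (k0' = 0 → m' = n) ∧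
        TwOf k n d c * Tg k n d n ^ k0 * TwOf k n d (Db (n-1) m) * Tg k n d j
          = TwOf k n d c' * Tg k n d n ^ k0' * TwOf k n d (Db (n-1) m') := by
  rcases Nat.eq_or_lt_of_le hjn with hjtop | hjlt
  · -- j = n
    rw [hjtop]
    rcases Nat.eq_or_lt_of_le hmn with hmtop | hmlt
    · -- m = n : multiply the power
      have hDb : Db (n-1) m = [] := by
        rw [hmtop]; exact Db_empty _ _ (by omega)
      rw [hDb, TwOf_nil, mul_one, mul_assoc, ← pow_succ]
      rcases Nat.lt_or_ge (k0 + 1) d with hlt | hge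
      · exact Or.inr ⟨c, k0 + 1, m, hc, by omega, hm1, by omega, by omega,
          by rw [hDb, TwOf_nil, mul_one]⟩
      · have : k0 + 1 = d := by omega
        rw [this, rel_last k n d hn, mul_zero]
        exact Or.inl rfl
    · -- m < n
      have hn2 : 2 ≤ n := by omega
      have hk1 : 1 ≤ k0 := by
        rcases Nat.eq_zero_or_pos k0 with h | h
        · exact absurd (hm0 h) (by omega)
        · exact h
      have hDb : Db (n-1) m = (n-1) :: Db (n-2) m := by
        rw [Db_cons (n-1) m hm1 (by omega), show n - 1 - 1 = n - 2 by omega]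
      have hcommn : ∀ i ∈ Db (n-2) m, 1 ≤ i ∧ i ≤ n ∧ (i + 1 < n ∨ n + 1 < i) := by
        intro i hi; have := Db_mem _ _ _ hi; exact ⟨by omega, by omega, Or.inl (by omega)⟩
      have key : TwOf k n d c * Tg k n d n ^ k0 * TwOf k n d (Db (n-1) m) * Tg k n d n
          = TwOf k n d c * (Tg k n d n ^ k0 * Tg k n d (n-1) * Tg k n d n)
              * TwOf k n d (Db (n-2) m) := by
        rw [hDb, TwOf_cons]
        simp only [mul_assoc]
        rw [← comm_word k n d n hn le_rfl (Db (n-2) m) hcommn]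
      rcases Nat.eq_or_lt_of_le hk1 with hk1e | hk2
      · -- k0 = 1 : braid once and push T_{n-1} into the prefix
        have key2 : TwOf k n d c * Tg k n d n ^ k0 * TwOf k n d (Db (n-1) m) * Tg k n d n
            = (TwOf k n d c * Tg k n d (n-1)) * Tg k n d n ^ 1
                * TwOf k n d (Db (n-1) m) := by
          rw [key, ← hk1e, pow_braid_one k n d hn2, hDb, TwOf_cons]
          simp only [pow_one, mul_assoc]
        rcases canon_mul k n d hn hc le_rfl (n-1) (by omega) le_rfl with h0 | ⟨c', hc', he⟩
        · rw [key2, h0, zero_mul, zero_mul]; exact Or.inl rfl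
        · exact Or.inr ⟨c', 1, m, hc', by omega, hm1, by omega, by omega,
            by rw [key2, he]⟩
      · -- k0 ≥ 2 : zero
        rw [key, pow_braid_zero k n d hn2 k0 hk2, mul_zero, zero_mul]
        exact Or.inl rfl
  · -- j ≤ n - 1
    have hjn1 : j ≤ n - 1 := by omega
    rcases Nat.eq_zero_or_pos k0 with hk0 | hk1
    · -- k0 = 0, so m = n and the descending part is empty: stay in the nil part
      have hmeq : m = n := hm0 hk0
      have hDb : Db (n-1) m = [] := by rw [hmeq]; exact Db_empty _ _ (by omega)
      rw [hk0, hDb, TwOf_nil, pow_zero, mul_one, mul_one]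
      rcases canon_mul k n d hn hc le_rfl j hj1 hjn1 with h0 | ⟨c', hc', he⟩
      · exact Or.inl h0
      · exact Or.inr ⟨c', 0, n, hc', by omega, hn, le_rfl, fun _ => rfl,
          by rw [he, pow_zero, mul_one, Db_empty (n-1) n (by omega), TwOf_nil, mul_one]⟩
    rcases Nat.lt_or_ge (j+1) m with hcase | hge
    · -- j + 1 < m : commute all the way to the prefix
      have hcomm : ∀ i ∈ Db (n-1) m, 1 ≤ i ∧ i ≤ n ∧ (i + 1 < j ∨ j + 1 < i) := by
        intro i hi; have := Db_mem _ _ _ hi; exact ⟨by omega, by omega, Or.inr (by omega)⟩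
      have key : TwOf k n d c * Tg k n d n ^ k0 * TwOf k n d (Db (n-1) m) * Tg k n d j
          = (TwOf k n d c * Tg k n d j) * Tg k n d n ^ k0 * TwOf k n d (Db (n-1) m) := by
        rw [mul_assoc _ (TwOf k n d (Db (n-1) m)),
          ← comm_word k n d j hj1 (by omega) (Db (n-1) m) hcomm,
          ← mul_assoc, mul_assoc _ (Tg k n d n ^ k0), ← comm_pow k n d j k0 hj1 (by omega)]
        simp only [mul_assoc]
      rcases canon_mul k n d hn hc le_rfl j hj1 hjn1 with h0 | ⟨c', hc', he⟩
      · rw [key, h0, zero_mul, zero_mul]; exact Or.inl rfl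
      · exact Or.inr ⟨c', k0, m, hc', hk, hm1, hmn, by omega, by rw [key, he]⟩
    rcases Nat.lt_or_ge j m with hcase2 | hge2
    · -- j + 1 = m : extend the descending run
      have hjm : j + 1 = m := by omega
      have hD : Db (n-1) m ++ [j] = Db (n-1) j := by
        rw [Db_snoc (n-1) j (by omega), hjm]
      refine Or.inr ⟨c, k0, j, hc, hk, hj1, hjn, by omega, ?_⟩
      rw [mul_assoc, ← mul_single, hD, mul_assoc]
    rcases Nat.eq_or_lt_of_le hge2 with hcase3 | hgt
    · -- j = m : square to zero
      left
      have hsq : TwOf k n d (Db (n-1) m ++ [j])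
          = TwOf k n d (Db (n-1) (m+1)) * (Tg k n d m * Tg k n d m) := by
        rw [Db_snoc (n-1) m (by omega), ← hcase3]
        simp only [TwOf_append, TwOf_singleton, mul_assoc]
      rw [mul_assoc, ← mul_single, hsq, rel_sq k n d m hm1 (by omega)]
      simp
    · -- m < j ≤ n - 1 : braid-shuffle into the prefix
      have key : TwOf k n d c * Tg k n d n ^ k0 * TwOf k n d (Db (n-1) m) * Tg k n d j
          = (TwOf k n d c * Tg k n d (j-1)) * Tg k n d n ^ k0 * TwOf k n d (Db (n-1) m) := by
        rw [mul_assoc _ (TwOf k n d (Db (n-1) m)),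
          desc_mul k n d (n-1) m j hm1 hgt hjn1 (by omega),
          ← mul_assoc, mul_assoc _ (Tg k n d n ^ k0),
          ← comm_pow k n d (j-1) k0 (by omega) (by omega)]
        simp only [mul_assoc]
      rcases canon_mul k n d hn hc le_rfl (j-1) (by omega) (by omega) with h0 | ⟨c', hc', he⟩
      · rw [key, h0, zero_mul, zero_mul]; exact Or.inl rfl
      · exact Or.inr ⟨c', k0, m, hc', hk, hm1, hmn, by omega, by rw [key, he]⟩

/-- Every word is `0` or in standard form. -/
lemma word_nf (hn : 1 ≤ n) (hd : 2 ≤ d) (l : List ℕ) (hl : ∀ j ∈ l, 1 ≤ j ∧ j ≤ n) :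
    TwOf k n d l = 0
    ∨ ∃ c k0 m, Canon (n-1) c ∧ k0 ≤ d - 1 ∧ 1 ≤ m ∧ m ≤ n ∧ (k0 = 0 → m = n) ∧
        TwOf k n d l = TwOf k n d c * Tg k n d n ^ k0 * TwOf k n d (Db (n-1) m) := by
  induction l using List.reverseRecOn with
  | nil =>
    refine Or.inr ⟨[], 0, n, Canon_le Canon.nil (by omega), by omega, hn, le_rfl,
      fun _ => rfl, ?_⟩
    rw [TwOf_nil, pow_zero, Db_empty _ _ (by omega), TwOf_nil]
    simp
  | append_singleton l j ih =>
    have hj := hl j (by simp)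
    rcases ih (fun i hi => hl i (by simp [hi])) with h0 | ⟨c, k0, m, hc, hk, hm1, hmn, hm0, he⟩
    · left; rw [mul_single, h0, zero_mul]
    · rw [mul_single, he]
      rcases top_step k n d hn hd c hc k0 m hk hm1 hmn hm0 j hj.1 hj.2 with h0 | h1
      · exact Or.inl h0
      · obtain ⟨c', k0', m', h⟩ := h1
        exact Or.inr ⟨c', k0', m', h.1, h.2.1, h.2.2.1, h.2.2.2.1, h.2.2.2.2.1, h.2.2.2.2.2⟩

end NCAux
namespace NCAux

variable (n : ℕ)

/-- Number of inversions of a permutation of `Fin n`. -/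
def inv (w : Equiv.Perm (Fin n)) : ℕ :=
  (Finset.univ.filter (fun p : Fin n × Fin n => p.1 < p.2 ∧ w p.2 < w p.1)).card

lemma inv_one : inv n 1 = 0 := by
  rw [inv, Finset.card_eq_zero, Finset.eq_empty_iff_forall_notMem]
  intro p hp
  rw [Finset.mem_filter] at hp
  simp only [Finset.mem_filter, Equiv.Perm.one_apply] at hp
  exact absurd hp.2.2 (lt_asymm hp.2.1)

/-- An adjacent swap preserves strict order on all pairs except `(a, b)` itself. -/
lemma swap_adj_lt {a b x y : Fin n} (hab : (a : ℕ) + 1 = b) (hxy : x < y)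
    (hne : ¬(x = a ∧ y = b)) : Equiv.swap a b x < Equiv.swap a b y := by
  have hxy' : (x : ℕ) < y := hxy
  rw [Fin.lt_def, Equiv.swap_apply_def, Equiv.swap_apply_def]
  have hne' : (x : ℕ) ≠ a ∨ (y : ℕ) ≠ b := by
    by_contra hcon
    push_neg at hcon
    exact hne ⟨Fin.ext hcon.1, Fin.ext hcon.2⟩
  split_ifs <;> (simp only [Fin.ext_iff] at *) <;> omega

end NCAux

namespace NCAux

variable (n : ℕ)

lemma inv_mul_swap_aux (w : Equiv.Perm (Fin n)) (a b : Fin n) :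
    inv n (w * Equiv.swap a b)
      = (Finset.univ.filter (fun q : Fin n × Fin n =>
          Equiv.swap a b q.1 < Equiv.swap a b q.2 ∧ w q.2 < w q.1)).card := by
  rw [inv]
  apply Finset.card_bij' (fun p _ => (Equiv.swap a b p.1, Equiv.swap a b p.2))
    (fun q _ => (Equiv.swap a b q.1, Equiv.swap a b q.2))
  · intro p hp
    rw [Finset.mem_filter] at hp ⊢
    simp only [Finset.mem_filter, Finset.mem_univ, true_and, Equiv.Perm.mul_apply] at hp ⊢
    simpa [Equiv.swap_apply_self] using ⟨hp.1, hp.2⟩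
  · intro q hq
    rw [Finset.mem_filter] at hq ⊢
    simp only [Finset.mem_filter, Finset.mem_univ, true_and, Equiv.Perm.mul_apply] at hq ⊢
    simpa [Equiv.swap_apply_self] using ⟨hq.1, hq.2⟩
  · intro p _; simp [Equiv.swap_apply_self]
  · intro q _; simp [Equiv.swap_apply_self]

lemma inv_mul_adj_le (w : Equiv.Perm (Fin n)) (a b : Fin n) (hab : (a : ℕ) + 1 = b) :
    inv n (w * Equiv.swap a b) ≤ inv n w + 1 := by
  rw [inv_mul_swap_aux]
  refine le_trans (Finset.card_le_card ?_) (Finset.card_insert_le (b, a) _)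
  intro q hq
  simp only [Finset.mem_filter, Finset.mem_univ, true_and] at hq
  by_cases hqb : q = (b, a)
  · simp [hqb]
  · rw [Finset.mem_insert]
    refine Or.inr (Finset.mem_filter.mpr ⟨Finset.mem_univ _, ?_, hq.2⟩)
    have hne : ¬(Equiv.swap a b q.1 = a ∧ Equiv.swap a b q.2 = b) := by
      rintro ⟨h1, h2⟩
      apply hqb
      have e1 : q.1 = b := by
        have := congrArg (Equiv.swap a b) h1
        simpa [Equiv.swap_apply_self, Equiv.swap_apply_left] using this
      have e2 : q.2 = a := by
        have := congrArg (Equiv.swap a b) h2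
        simpa [Equiv.swap_apply_self, Equiv.swap_apply_right] using this
      exact Prod.ext e1 e2
    have := swap_adj_lt n hab hq.1 hne
    simpa [Equiv.swap_apply_self] using this

lemma inv_mul_adj_eq (w : Equiv.Perm (Fin n)) (a b : Fin n) (hab : (a : ℕ) + 1 = b)
    (h : w a < w b) :
    inv n (w * Equiv.swap a b) = inv n w + 1 := by
  rw [inv_mul_swap_aux]
  have hQ : (Finset.univ.filter (fun q : Fin n × Fin n =>
        Equiv.swap a b q.1 < Equiv.swap a b q.2 ∧ w q.2 < w q.1))
      = insert (b, a) (Finset.univ.filter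
          (fun q : Fin n × Fin n => q.1 < q.2 ∧ w q.2 < w q.1)) := by
    ext q
    simp only [Finset.mem_filter, Finset.mem_insert, Finset.mem_univ, true_and]
    constructor
    · rintro ⟨hs, hw⟩
      by_cases hqb : q = (b, a)
      · exact Or.inl hqb
      · refine Or.inr ⟨?_, hw⟩
        have hne : ¬(Equiv.swap a b q.1 = a ∧ Equiv.swap a b q.2 = b) := by
          rintro ⟨h1, h2⟩
          apply hqb
          have e1 : q.1 = b := by
            have := congrArg (Equiv.swap a b) h1
            simpa [Equiv.swap_apply_self, Equiv.swap_apply_left] using this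
          have e2 : q.2 = a := by
            have := congrArg (Equiv.swap a b) h2
            simpa [Equiv.swap_apply_self, Equiv.swap_apply_right] using this
          exact Prod.ext e1 e2
        have := swap_adj_lt n hab hs hne
        simpa [Equiv.swap_apply_self] using this
    · rintro (rfl | ⟨hlt, hw⟩)
      · refine ⟨?_, h⟩
        rw [Equiv.swap_apply_left, Equiv.swap_apply_right]
        rw [Fin.lt_def]; omega
      · refine ⟨?_, hw⟩
        refine swap_adj_lt n hab hlt ?_
        rintro ⟨rfl, rfl⟩
        exact absurd hw (lt_asymm h)
  rw [hQ, Finset.card_insert_of_notMem, inv]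
  simp only [Finset.mem_filter, Finset.mem_univ, true_and, not_and]
  intro hba
  exact absurd hba (by rw [Fin.lt_def]; omega)

end NCAux
namespace NCAux

variable (n : ℕ)

lemma sp_def (j : ℕ) (h1 : 1 ≤ j) (h2 : j < n) :
    sp n j = Equiv.swap ⟨j - 1, by omega⟩ ⟨j, h2⟩ := dif_pos ⟨h1, h2⟩

lemma inv_sp_le (w : Equiv.Perm (Fin n)) (j : ℕ) (h1 : 1 ≤ j) (h2 : j < n) :
    inv n (w * sp n j) ≤ inv n w + 1 := by
  rw [sp_def n j h1 h2]
  exact inv_mul_adj_le n w _ _ (by simp; omega)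

/-- Any word has at least `inv` of its product many letters. -/
lemma inv_le_length (l : List ℕ) (hl : ∀ j ∈ l, 1 ≤ j ∧ j < n) :
    inv n ((l.map (sp n)).prod) ≤ l.length := by
  induction l using List.reverseRecOn with
  | nil => simp [inv_one]
  | append_singleton l j ih =>
    have hj := hl j (by simp)
    rw [List.map_append, List.prod_append, List.map_singleton, List.prod_singleton]
    calc inv n ((l.map (sp n)).prod * sp n j)
        ≤ inv n ((l.map (sp n)).prod) + 1 := inv_sp_le n _ j hj.1 hj.2
      _ ≤ l.length + 1 := by
          have := ih (fun i hi => hl i (by simp [hi])); omega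
      _ = (l ++ [j]).length := by simp

lemma sp_apply_low (j : ℕ) (h1 : 1 ≤ j) (h2 : j < n) (x : Fin n)
    (hx : (x : ℕ) < j - 1) : sp n j x = x := by
  rw [sp_def n j h1 h2]
  exact Equiv.swap_apply_of_ne_of_ne (by rw [Fin.ne_iff_vne]; simp; omega)
    (by rw [Fin.ne_iff_vne]; simp; omega)

lemma sp_apply_high (j : ℕ) (h1 : 1 ≤ j) (h2 : j < n) (x : Fin n)
    (hx : j < (x : ℕ)) : sp n j x = x := by
  rw [sp_def n j h1 h2]
  exact Equiv.swap_apply_of_ne_of_ne (by rw [Fin.ne_iff_vne]; simp; omega)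
    (by rw [Fin.ne_iff_vne]; simp; omega)

lemma sp_apply_left (j : ℕ) (h1 : 1 ≤ j) (h2 : j < n) :
    sp n j ⟨j - 1, by omega⟩ = ⟨j, h2⟩ := by
  rw [sp_def n j h1 h2]; exact Equiv.swap_apply_left _ _

/-- A word with letters `≤ M` fixes all points `> M` (`0`-indexed: indices `> M`). -/
lemma word_fix (M : ℕ) (l : List ℕ) (hl : ∀ j ∈ l, 1 ≤ j ∧ j ≤ M ∧ j < n)
    (x : Fin n) (hx : M < (x : ℕ)) : (l.map (sp n)).prod x = x := by
  induction l with
  | nil => simp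
  | cons a l ih =>
    obtain ⟨ha1, ha2, ha3⟩ := hl a (by simp)
    rw [List.map_cons, List.prod_cons, Equiv.Perm.mul_apply,
      ih (fun i hi => hl i (by simp [hi])), sp_apply_high n a ha1 ha3 x (by omega)]

lemma word_small (M : ℕ) (u : Equiv.Perm (Fin n))
    (hu : ∀ x : Fin n, M < (x : ℕ) → u x = x) (x : Fin n) (hx : (x : ℕ) ≤ M) :
    (u x : ℕ) ≤ M := by
  by_contra hcon
  push_neg at hcon
  have := u.injective (hu (u x) hcon)
  omega

/-- Multiplying by a full descending run `s_j s_{j-1} ⋯ s_m` adds exactly its length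
to the inversion number, provided `u` sends everything below `j` below `u ⟨j⟩`. -/
lemma desc_inv_aux : ∀ (Δ j m : ℕ), j = m + Δ → 1 ≤ m → ∀ (hjn : j < n),
    ∀ u : Equiv.Perm (Fin n),
    (∀ x : Fin n, (x : ℕ) < j → u x < u ⟨j, hjn⟩) →
    inv n (u * ((Db j m).map (sp n)).prod) = inv n u + (j + 1 - m) := by
  intro Δ
  induction Δ with
  | zero =>
    intro j m hjm h1 hjn u hu
    have hj : j = m := by omega
    subst hj
    rw [Db_self, List.map_singleton, List.prod_singleton,
      show j + 1 - j = 1 by omega]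
    rw [sp_def n j (by omega) hjn]
    exact inv_mul_adj_eq n u _ _ (by simp; omega)
      (hu ⟨j - 1, by omega⟩ (by simp; omega))
  | succ Δ ih =>
    intro j m hjm h1 hjn u hu
    rw [Db_cons j m h1 (by omega), List.map_cons, List.prod_cons, ← mul_assoc]
    have hstep : inv n (u * sp n j) = inv n u + 1 := by
      rw [sp_def n j (by omega) hjn]
      exact inv_mul_adj_eq n u _ _ (by simp; omega)
        (hu ⟨j - 1, by omega⟩ (by simp; omega))
    have hrec := ih (j-1) m (by omega) h1 (by omega) (u * sp n j) ?_
    · rw [hrec, hstep]; omega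
    · intro x hx
      have e1 : (u * sp n j) x = u x := by
        rw [Equiv.Perm.mul_apply, sp_apply_low n j (by omega) hjn x (by omega)]
      have e2 : (u * sp n j) ⟨j - 1, by omega⟩ = u ⟨j, by omega⟩ := by
        rw [Equiv.Perm.mul_apply, sp_apply_left n j (by omega) hjn]
      rw [e1, e2]
      exact hu x (by omega)

/-- Canonical words have inversion number equal to their length. -/
lemma canon_inv {M : ℕ} {c : List ℕ} (hc : Canon M c) (hM : M < n) :
    inv n ((c.map (sp n)).prod) = c.length := by
  induction hc with
  | nil => simp [inv_one]
  | @skip M c hc ih => exact ih (by omega)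
  | @block M c m hc hm1 hm2 ih =>
    rw [List.map_append, List.prod_append]
    have hmem := Canon_mem hc
    have hfix : ∀ x : Fin n, M < (x : ℕ) → (c.map (sp n)).prod x = x :=
      word_fix n M c (fun j hj => ⟨(hmem j hj).1, (hmem j hj).2, by
        have := (hmem j hj).2; omega⟩)
    have hstep := desc_inv_aux n (M + 1 - m) (M+1) m (by omega) hm1 hM
      ((c.map (sp n)).prod) ?_
    · rw [hstep, ih (by omega), List.length_append, Db_length]
    · intro x hx
      have h1 : ((c.map (sp n)).prod x : ℕ) ≤ M := by
        rcases Nat.lt_or_ge (x : ℕ) (M+1) with h | h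
        · exact word_small n M _ hfix x (by omega)
        · omega
      have h2 : (c.map (sp n)).prod ⟨M+1, by omega⟩ = ⟨M+1, by omega⟩ :=
        hfix _ (by simp)
      rw [h2, Fin.lt_def]
      simpa using by omega

/-- A canonical word at level `n-1` is a reduced word for its product. -/
lemma canon_red (hn : 1 ≤ n) {c : List ℕ} (hc : Canon (n-1) c) :
    IsRedWord n ((c.map (sp n)).prod) c := by
  have hmem := Canon_mem hc
  refine ⟨fun j hj => ⟨(hmem j hj).1, by have := (hmem j hj).2; omega⟩, rfl, ?_⟩
  intro l' hl' hp
  have h1 := canon_inv n hc (by omega)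
  have h2 := inv_le_length n l' hl'
  rw [hp, h1] at h2
  exact h2

end NCAux

namespace NCAux

lemma mem_adjoin (k : Type) [CommRing k] (n d : ℕ) (c : List ℕ)
    (hc : ∀ j ∈ c, 1 ≤ j ∧ j ≤ n - 1) :
    TwOf k n d c ∈ Algebra.adjoin k
      {x : NCA k n d | ∃ j, 1 ≤ j ∧ j ≤ n - 1 ∧ x = Tg k n d j} := by
  induction c with
  | nil => rw [TwOf_nil]; exact Subalgebra.one_mem _
  | cons a c ih =>
    rw [TwOf_cons]
    exact Subalgebra.mul_mem _
      (Algebra.subset_adjoin ⟨a, (hc a (by simp)).1, (hc a (by simp)).2, rfl⟩)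
      (ih (fun j hj => hc j (by simp [hj])))

end NCAux

/-- Every nonzero product of generators in `NC_A(n,d)` either lies in the subalgebra
generated by `T_1, …, T_{n-1}`, or equals an element in standard form
`T_w T_n^k T_{n-1} ⋯ T_m` with `w ∈ S_n`, `1 ≤ k ≤ d-1`, `1 ≤ m ≤ n`. -/
theorem NCA_standard_form (k : Type) [CommRing k] (n d : ℕ) (hn : 1 ≤ n) (hd : 2 ≤ d)
    (l : List ℕ) (hl : ∀ j ∈ l, 1 ≤ j ∧ j ≤ n) (hne : TwOf k n d l ≠ 0) :
    TwOf k n d l ∈ Algebra.adjoin k {x : NCA k n d | ∃ j, 1 ≤ j ∧ j ≤ n - 1 ∧ x = Tg k n d j}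
    ∨ ∃ (w : Equiv.Perm (Fin n)) (lw : List ℕ) (k0 m : ℕ),
        IsRedWord n w lw ∧ 1 ≤ k0 ∧ k0 ≤ d - 1 ∧ 1 ≤ m ∧ m ≤ n ∧
        TwOf k n d l = TwOf k n d lw * Tg k n d n ^ k0 * descT k n d m := by
  rcases NCAux.word_nf k n d hn hd l hl with h0 | ⟨c, k0, m, hc, hk, hm1, hmn, hm0, he⟩
  · exact absurd h0 hne
  rcases Nat.eq_zero_or_pos k0 with hk0 | hk1
  · left
    have hmeq : m = n := hm0 hk0
    rw [he, hk0, pow_zero, mul_one, hmeq, NCAux.Db_empty (n-1) n (by omega),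
      NCAux.TwOf_nil, mul_one]
    exact NCAux.mem_adjoin k n d c (NCAux.Canon_mem hc)
  · right
    exact ⟨(c.map (sp n)).prod, c, k0, m, NCAux.canon_red n hn hc, hk1, hk, hm1, hmn,
      by rw [he, NCAux.descT_eq k n d hn m]⟩
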